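/- Let p be a prime, n ≥ 1, and take all shift parameters b_i = 1, so 𝔟(s) = s, b = p^n + 1, and for 2 ≤ h ≤ p^n set m = h − 1 and d(s) = ⌊(1 + p^n + s − h)/p^n⌋, i.e., d(s) = 1 if s ≥ m and d(s) = 0 if s < m. Define w(s) = min{d(u) − d(u−s) : s ⪯ u}. Then w(s) = 1 if s ≥ max(m, p^n − m) and w(s) = 0 otherwise. -/

import Mathlib

/-- The `i`-th base-`p` digit of `s`. -/
def dig (p s i : ℕ) : ℕ := s / p ^ i % p

/-- Digitwise partial order on base-`p` expansions: `s ⪯ t`. -/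
def preceq (p s t : ℕ) : Prop := ∀ i, dig p s i ≤ dig p t i

/-- Weakly ramified case (all shift parameters `1`): `d(s) = ⌊(1 + p^n + s − h)/p^n⌋`. -/
def dfun (p n h : ℕ) (s : ℕ) : ℤ :=
  Int.fdiv (1 + (p : ℤ) ^ n + s - h) ((p : ℤ) ^ n)

/-- `w(s) = min { d(u) − d(u−s) : u ∈ {0,…,p^n−1}, s ⪯ u }`. -/
noncomputable def wfun (p n h : ℕ) (s : ℕ) : ℤ :=
  sInf ((fun u => dfun p n h u - dfun p n h (u - s)) ''
    {u : ℕ | u < p ^ n ∧ preceq p s u})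

lemma dig_succ' (p s i : ℕ) : dig p s (i+1) = dig p (s/p) i := by
  simp [dig, Nat.div_div_eq_div_mul, pow_succ']

lemma preceq_le (p : ℕ) (hp : 1 < p) : ∀ s u, preceq p s u → s ≤ u := by
  intro s
  induction s using Nat.strong_induction_on with
  | _ s ih =>
    intro u hpre
    rcases Nat.eq_zero_or_pos s with h0 | h0
    · omega
    have h1 : s % p ≤ u % p := by simpa [dig] using hpre 0
    have h2 : preceq p (s/p) (u/p) := by
      intro i; simpa [dig_succ'] using hpre (i+1)
    have h3 : s / p ≤ u / p := ih (s/p) (Nat.div_lt_self h0 hp) (u/p) h2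
    have e1 := Nat.div_add_mod s p
    have e2 := Nat.div_add_mod u p
    have := Nat.mul_le_mul_left p h3
    omega

lemma dig_pred_pow (p n i : ℕ) (hp : 1 < p) (hi : i < n) :
    dig p (p ^ n - 1) i = p - 1 := by
  have ha : 0 < p ^ i := Nat.pow_pos (by omega)
  have hb : 0 < p ^ (n - i - 1) := Nat.pow_pos (by omega)
  have e : p ^ n = p ^ i * (p * p ^ (n - i - 1)) := by
    rw [← pow_succ', ← pow_add]; congr 1; omega
  have key : p ^ n - 1 = p ^ i * (p * p ^ (n - i - 1) - 1) + (p ^ i - 1) := by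
    have h1 : p ^ i * (p * p ^ (n - i - 1) - 1)
        = p ^ i * (p * p ^ (n - i - 1)) - p ^ i := by
      rw [Nat.mul_sub, Nat.mul_one]
    have h2 : p ^ i ≤ p ^ i * (p * p ^ (n - i - 1)) :=
      Nat.le_mul_of_pos_right _ (by positivity)
    omega
  have hdiv : (p ^ n - 1) / p ^ i = p * p ^ (n - i - 1) - 1 := by
    rw [key, Nat.mul_add_div ha, Nat.div_eq_of_lt (by omega)]
    omega
  have key2 : p * p ^ (n - i - 1) - 1 = p * (p ^ (n - i - 1) - 1) + (p - 1) := by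
    have h1 : p * (p ^ (n - i - 1) - 1) = p * p ^ (n - i - 1) - p := by
      rw [Nat.mul_sub, Nat.mul_one]
    have h2 : p ≤ p * p ^ (n - i - 1) := Nat.le_mul_of_pos_right _ hb
    omega
  have : (p * p ^ (n - i - 1) - 1) % p = p - 1 := by
    rw [key2, Nat.mul_add_mod, Nat.mod_eq_of_lt (by omega)]
  simpa [dig, hdiv] using this

lemma preceq_top (p n s : ℕ) (hp : 1 < p) (hs : s < p ^ n) :
    preceq p s (p ^ n - 1) := by
  intro i
  by_cases hi : i < n
  · have h1 : dig p (p ^ n - 1) i = p - 1 := dig_pred_pow p n i hp hi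
    have h2 : dig p s i < p := Nat.mod_lt _ (by omega)
    omega
  · have hle : p ^ n ≤ p ^ i := Nat.pow_le_pow_right (by omega) (by omega)
    have : dig p s i = 0 := by
      simp [dig, Nat.div_eq_of_lt (lt_of_lt_of_le hs hle)]
    omega

lemma dfun_eval (p n h s : ℕ) (hp : 1 < p) (hh1 : 2 ≤ h) (hh2 : h ≤ p ^ n)
    (hs : s < p ^ n) : dfun p n h s = if h - 1 ≤ s then 1 else 0 := by
  have hN : ((p ^ n : ℕ) : ℤ) = (p : ℤ) ^ n := by push_cast; ring
  have hNpos : 0 < p ^ n := Nat.pow_pos (by omega)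
  unfold dfun
  rw [← hN, Int.fdiv_eq_ediv_of_nonneg _ (by exact_mod_cast Nat.zero_le _)]
  by_cases hc : h - 1 ≤ s
  · have e : (1 + ((p ^ n : ℕ) : ℤ) + s - h) = ((s - (h - 1) : ℕ) : ℤ) + 1 * (p ^ n : ℕ) := by
      omega
    rw [e, Int.add_mul_ediv_right _ _ (by exact_mod_cast hNpos.ne'),
      Int.ediv_eq_zero_of_lt (by omega) (by omega), if_pos hc]
    norm_num
  · rw [Int.ediv_eq_zero_of_lt (by omega) (by omega), if_neg hc]

theorem stmt_10 (p n : ℕ) (hp : p.Prime) (hn : 1 ≤ n) (h : ℕ)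
    (hh1 : 2 ≤ h) (hh2 : h ≤ p ^ n) :
    ∀ s : ℕ, s < p ^ n →
      wfun p n h s = if max (h - 1) (p ^ n - (h - 1)) ≤ s then 1 else 0 := by
  intro s hs
  have hp1 : 1 < p := hp.one_lt
  have hNpos : 0 < p ^ n := Nat.pow_pos (by omega)
  set S : Set ℕ := {u : ℕ | u < p ^ n ∧ preceq p s u} with hS
  have hSs : s ∈ S := ⟨hs, fun i => le_rfl⟩
  have hStop : p ^ n - 1 ∈ S := ⟨by omega, preceq_top p n s hp1 hs⟩
  have hle : ∀ u ∈ S, s ≤ u := fun u hu => preceq_le p hp1 s u hu.2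
  have fval : ∀ u ∈ S, dfun p n h u - dfun p n h (u - s)
      = (if h - 1 ≤ u then 1 else 0) - (if h - 1 ≤ u - s then 1 else 0) := by
    intro u hu
    rw [dfun_eval p n h u hp1 hh1 hh2 hu.1,
      dfun_eval p n h (u - s) hp1 hh1 hh2 (by have := hu.1; omega)]
  unfold wfun
  rw [← hS]
  split_ifs with hc
  · have hc1 : h - 1 ≤ s := le_trans (le_max_left _ _) hc
    have hc2 : p ^ n - (h - 1) ≤ s := le_trans (le_max_right _ _) hc
    apply IsLeast.csInf_eq
    constructor
    · refine ⟨p ^ n - 1, hStop, ?_⟩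
      show dfun p n h (p ^ n - 1) - dfun p n h (p ^ n - 1 - s) = 1
      rw [fval _ hStop, if_pos (by omega), if_neg (by omega)]
      norm_num
    · rintro x ⟨u, hu, rfl⟩
      show (1:ℤ) ≤ dfun p n h u - dfun p n h (u - s)
      rw [fval u hu]
      have h1 := hle u hu
      have h2 := hu.1
      split_ifs <;> omega
  · apply IsLeast.csInf_eq
    constructor
    · by_cases hsm : h - 1 ≤ s
      · have hc2 : s < p ^ n - (h - 1) := by
          by_contra hx
          exact hc (max_le hsm (not_lt.mp hx))
        refine ⟨p ^ n - 1, hStop, ?_⟩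
        show dfun p n h (p ^ n - 1) - dfun p n h (p ^ n - 1 - s) = 0
        rw [fval _ hStop, if_pos (by omega), if_pos (by omega)]
        norm_num
      · refine ⟨s, hSs, ?_⟩
        show dfun p n h s - dfun p n h (s - s) = 0
        rw [fval _ hSs, if_neg hsm, if_neg (by omega)]
        norm_num
    · rintro x ⟨u, hu, rfl⟩
      show (0:ℤ) ≤ dfun p n h u - dfun p n h (u - s)
      rw [fval u hu]
      have h1 := hle u hu
      split_ifs <;> omega
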